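/- Let (Ω, P) be a finite probability space, T = {0, Δ, ..., TΔ} with all functions extended periodically with period (T+1)Δ, and let Z : Ω × T → ℝ^K be a vector-valued stochastic process that is weakly stationary with mean zero. Let U : Ω → T be uniformly distributed and independent of Z. Then the shifted process (ω,t) ↦ Z(ω; t − U(ω)) is also weakly stationary with mean zero, and moreover E[Z_k(t−U) Z_l(t+s−U)] = E[Z_k(0) Z_l(s)] for all k, l ∈ {1,...,K} and all t, s ∈ T. -/

import Mathlib

open scoped BigOperators

lemma sum_split_by_U {Ω : Type*} [Fintype Ω] {A : Type*} [Fintype A] [DecidableEq A]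
    (p : Ω → ℝ) (U : Ω → A) (H : Ω → A → ℝ) :
    ∑ ω, p ω * H ω (U ω) = ∑ u, ∑ ω, (if U ω = u then p ω else 0) * H ω u := by
  rw [Finset.sum_comm]
  refine Finset.sum_congr rfl fun ω _ => ?_
  have : ∀ u, (if U ω = u then p ω else 0) * H ω u
      = if U ω = u then p ω * H ω u else 0 := by
    intro u; split <;> simp
  simp only [this, Finset.sum_ite_eq', Finset.mem_univ, if_true]
  simp

/-- If `Z` is a weakly stationary mean-zero vector process on the cyclic
time set `ZMod (T+1)` (periodic extension) on a finite probability space, and `U` is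
uniformly distributed and independent of `Z`, then the shifted process
`(ω,t) ↦ Z(ω; t - U(ω))` is also weakly stationary with mean zero, and
`E[Z_k(t-U) Z_l(t+s-U)] = E[Z_k(0) Z_l(s)]`. -/
theorem shifted_process_WSMZ (T K : ℕ) (Ω : Type*) [Fintype Ω] (p : Ω → ℝ)
    (hp0 : ∀ ω, 0 ≤ p ω) (hp1 : ∑ ω, p ω = 1)
    (Z : Ω → ZMod (T + 1) → Fin K → ℝ)
    (hmean : ∀ (t : ZMod (T + 1)) (k : Fin K), ∑ ω, p ω * Z ω t k = 0)
    (hstat : ∀ (k l : Fin K) (t t' s : ZMod (T + 1)),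
      ∑ ω, p ω * (Z ω t k * Z ω (t + s) l) = ∑ ω, p ω * (Z ω t' k * Z ω (t' + s) l))
    (U : Ω → ZMod (T + 1))
    (hU : ∀ u : ZMod (T + 1), ∑ ω, (if U ω = u then p ω else 0) = 1 / (T + 1))
    (hind : ∀ (u : ZMod (T + 1)) (G : (ZMod (T + 1) → Fin K → ℝ) → ℝ),
      ∑ ω, (if U ω = u then p ω else 0) * G (Z ω)
        = (1 / (T + 1)) * ∑ ω, p ω * G (Z ω)) :
    (∀ (t : ZMod (T + 1)) (k : Fin K), ∑ ω, p ω * Z ω (t - U ω) k = 0) ∧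
    (∀ (k l : Fin K) (t s : ZMod (T + 1)),
      ∑ ω, p ω * (Z ω (t - U ω) k * Z ω (t + s - U ω) l)
        = ∑ ω, p ω * (Z ω 0 k * Z ω s l)) := by
  constructor
  · intro t k
    have h := sum_split_by_U p U (fun ω u => Z ω (t - u) k)
    rw [h]
    refine Finset.sum_eq_zero fun u _ => ?_
    have := hind u (fun f => f (t - u) k)
    rw [this, hmean (t - u) k, mul_zero]
  · intro k l t s
    have h := sum_split_by_U p U (fun ω u => Z ω (t - u) k * Z ω (t + s - u) l)
    rw [h]
    have key : ∀ u : ZMod (T + 1),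
        ∑ ω, (if U ω = u then p ω else 0) * (Z ω (t - u) k * Z ω (t + s - u) l)
          = (1 / (T + 1)) * ∑ ω, p ω * (Z ω 0 k * Z ω s l) := by
      intro u
      have := hind u (fun f => f (t - u) k * f (t + s - u) l)
      rw [this]
      congr 1
      have h2 : t + s - u = (t - u) + s := by ring
      rw [h2]
      have := hstat k l (t - u) 0 s
      simpa using this
    simp only [key]
    rw [Finset.sum_const]
    have hcard : (Fintype.card (ZMod (T + 1)) : ℝ) = (T + 1 : ℝ) := by
      rw [ZMod.card]; push_cast; ring
    simp only [Finset.card_univ, nsmul_eq_mul, hcard]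
    have : ((T : ℝ) + 1) ≠ 0 := by positivity
    field_simp
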